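/- Let K ⊂ ℝ² be a convex body (compact, convex, with nonempty interior) and suppose there is a unit vector u with h_K(u) + h_K(−u) = w(K) such that K is spiky in direction u. Then for every ε ∈ (0,1) there exists y ∈ ℝ² with ε·K + y ⊂ int K such that the annulus K \ (ε·K + y) can be covered by a finite family of planks whose total width is strictly less than w(K). -/

import Mathlib

open Set Metric Pointwise RealInnerProductSpace MeasureTheory

noncomputable section


/-- A plank in `ℝ^d`: the region between two parallel hyperplanes, of width `w`. -/
def IsPlank {d : ℕ} (P : Set (EuclideanSpace ℝ (Fin d))) (w : ℝ) : Prop :=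
  ∃ (u : EuclideanSpace ℝ (Fin d)) (a b : ℝ), ‖u‖ = 1 ∧ a ≤ b ∧ w = b - a ∧
    P = {x | a ≤ ⟪x, u⟫ ∧ ⟪x, u⟫ ≤ b}

/-- The support function of a set. -/
def suppFn {d : ℕ} (K : Set (EuclideanSpace ℝ (Fin d))) (u : EuclideanSpace ℝ (Fin d)) : ℝ :=
  sSup ((fun x => ⟪x, u⟫) '' K)

/-- The minimal width of a set: the minimum of `h_K(u) + h_K(-u)` over unit vectors `u`. -/
def minWidth {d : ℕ} (K : Set (EuclideanSpace ℝ (Fin d))) : ℝ :=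
  sInf {w | ∃ u : EuclideanSpace ℝ (Fin d), ‖u‖ = 1 ∧ w = suppFn K u + suppFn K (-u)}

/-- The supporting hyperplane of `K` with outer normal `u`. -/
def suppHyp {d : ℕ} (K : Set (EuclideanSpace ℝ (Fin d))) (u : EuclideanSpace ℝ (Fin d)) :
    Set (EuclideanSpace ℝ (Fin d)) :=
  {x | ⟪x, u⟫ = suppFn K u}

/-- The tangent cone of `K` at a point `x`:
`closure {x + α (y - x) : y ∈ K, α ≥ 0}`. -/
def tangentConeOf {d : ℕ} (K : Set (EuclideanSpace ℝ (Fin d))) (x : EuclideanSpace ℝ (Fin d)) :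
    Set (EuclideanSpace ℝ (Fin d)) :=
  closure {z | ∃ y ∈ K, ∃ α : ℝ, 0 ≤ α ∧ z = x + α • (y - x)}

/-- `K` is spiky in direction `u`: `K ∩ H_K(u)` is a single point `x` at which
`T_K(x) ∩ H_K(u) = {x}`. -/
def IsSpiky {d : ℕ} (K : Set (EuclideanSpace ℝ (Fin d))) (u : EuclideanSpace ℝ (Fin d)) : Prop :=
  ∃ x, K ∩ suppHyp K u = {x} ∧ tangentConeOf K x ∩ suppHyp K u = {x}


abbrev E2 := EuclideanSpace ℝ (Fin 2)

lemma inner_coords (x y : E2) : ⟪x, y⟫ = x 0 * y 0 + x 1 * y 1 := by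
  simp [PiLp.inner_apply, Fin.sum_univ_two, RCLike.inner_apply, mul_comm]

lemma unit_sq {u : E2} (hu : ‖u‖ = 1) : u 0 * u 0 + u 1 * u 1 = 1 := by
  have h := real_inner_self_eq_norm_sq u
  rw [inner_coords, hu] at h
  simpa using h

def vperp (u : E2) : E2 := WithLp.toLp 2 ![-(u 1), u 0]

lemma vperp_apply0 (u : E2) : vperp u 0 = -(u 1) := rfl
lemma vperp_apply1 (u : E2) : vperp u 1 = u 0 := rfl

lemma norm_vperp {u : E2} (hu : ‖u‖ = 1) : ‖vperp u‖ = 1 := by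
  have h : ⟪vperp u, vperp u⟫ = 1 := by
    rw [inner_coords, vperp_apply0, vperp_apply1]
    nlinarith [unit_sq hu]
  have h2 := real_inner_self_eq_norm_sq (vperp u)
  rw [h] at h2
  nlinarith [norm_nonneg (vperp u)]

lemma inner_u_vperp (u : E2) : ⟪u, vperp u⟫ = 0 := by
  rw [inner_coords, vperp_apply0, vperp_apply1]; ring

lemma expand_basis {u : E2} (hu : ‖u‖ = 1) (x : E2) :
    x = ⟪x, u⟫ • u + ⟪x, vperp u⟫ • vperp u := by
  have hs := unit_sq hu
  have key : ∀ i : Fin 2, x i = ⟪x, u⟫ * u i + ⟪x, vperp u⟫ * vperp u i := by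
    intro i
    fin_cases i
    · simp only [Fin.mk_zero, inner_coords, vperp_apply0, vperp_apply1, Fin.isValue]
      linear_combination (-(x 0)) * hs
    · simp only [Fin.mk_one, inner_coords, vperp_apply0, vperp_apply1, Fin.isValue]
      linear_combination (-(x 1)) * hs
  ext i
  have := key i
  show x i = ⟪x, u⟫ * u i + ⟪x, vperp u⟫ * vperp u i
  exact this

lemma inner_combo {u : E2} (hu : ‖u‖ = 1) (a b c d : ℝ) :
    ⟪a • u + b • vperp u, c • u + d • vperp u⟫ = a * c + b * d := by
  have h1 : ⟪u, u⟫ = (1:ℝ) := by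
    rw [real_inner_self_eq_norm_sq, hu]; norm_num
  have h2 : ⟪vperp u, vperp u⟫ = (1:ℝ) := by
    rw [real_inner_self_eq_norm_sq, norm_vperp hu]; norm_num
  have h3 := inner_u_vperp u
  have h4 : ⟪vperp u, u⟫ = (0:ℝ) := by rw [real_inner_comm]; exact h3
  simp [inner_add_left, inner_add_right, real_inner_smul_left, real_inner_smul_right,
    h1, h2, h3, h4]
  rw [hu, norm_vperp hu]; ring

lemma exists_angle {a b : ℝ} (h : a ^ 2 + b ^ 2 = 1) :
    ∃ θ : ℝ, -Real.pi < θ ∧ θ ≤ Real.pi ∧ Real.cos θ = a ∧ Real.sin θ = b := by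
  set z : ℂ := ⟨a, b⟩ with hz
  have habs : ‖z‖ = 1 := by
    rw [Complex.norm_def, Complex.normSq_mk]
    rw [show a * a + b * b = 1 by nlinarith]
    exact Real.sqrt_one
  have hz0 : z ≠ 0 := by
    intro h0; rw [h0] at habs; simp at habs
  refine ⟨Complex.arg z, Complex.neg_pi_lt_arg z, Complex.arg_le_pi z, ?_, ?_⟩
  · rw [Complex.cos_arg hz0, habs]; simp [hz]
  · rw [Complex.sin_arg, habs]; simp [hz]

lemma trig_id1 (θ₁ θ θ₂ : ℝ) :
    Real.sin (θ₂ - θ₁) * Real.cos θ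
      = Real.sin (θ₂ - θ) * Real.cos θ₁ + Real.sin (θ - θ₁) * Real.cos θ₂ := by
  rw [Real.sin_sub, Real.sin_sub, Real.sin_sub]; ring

lemma trig_id2 (θ₁ θ θ₂ : ℝ) :
    Real.sin (θ₂ - θ₁) * Real.sin θ
      = Real.sin (θ₂ - θ) * Real.sin θ₁ + Real.sin (θ - θ₁) * Real.sin θ₂ := by
  rw [Real.sin_sub, Real.sin_sub, Real.sin_sub]; ring

lemma vector_trig_id {u : E2} (θ₁ θ θ₂ : ℝ) :
    Real.sin (θ₂ - θ₁) • (Real.cos θ • u + Real.sin θ • vperp u)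
      = Real.sin (θ₂ - θ) • (Real.cos θ₁ • u + Real.sin θ₁ • vperp u)
        + Real.sin (θ - θ₁) • (Real.cos θ₂ • u + Real.sin θ₂ • vperp u) := by
  simp only [smul_add, smul_smul]
  rw [trig_id1 θ₁ θ θ₂, trig_id2 θ₁ θ θ₂]
  module

lemma norm_combo {u : E2} (hu : ‖u‖ = 1) (a b : ℝ) (hab : a ^ 2 + b ^ 2 = 1) :
    ‖a • u + b • vperp u‖ = 1 := by
  have h : ⟪a • u + b • vperp u, a • u + b • vperp u⟫ = 1 := by
    rw [inner_combo hu]; nlinarith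
  rw [real_inner_self_eq_norm_sq] at h
  nlinarith [norm_nonneg (a • u + b • vperp u)]

lemma loc_lemma (K : Set E2) (p : E2) {δ : ℝ} (hδ : 0 < δ) :
    ∃ δ₀ > 0, ∀ n : E2, ‖n‖ = 1 → (∀ x ∈ K, ⟪x - p, n⟫ ≤ δ₀) →
      ∃ m : E2, ‖m‖ = 1 ∧ (∀ x ∈ K, ⟪x - p, m⟫ ≤ 0) ∧ ‖n - m‖ ≤ δ := by
  by_contra hc
  push_neg at hc
  have hseq : ∀ k : ℕ, ∃ n : E2, ‖n‖ = 1 ∧ (∀ x ∈ K, ⟪x - p, n⟫ ≤ 1 / (k + 1)) ∧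
      ∀ m : E2, ‖m‖ = 1 → (∀ x ∈ K, ⟪x - p, m⟫ ≤ 0) → δ < ‖n - m‖ := by
    intro k
    obtain ⟨n, h1, h2, h3⟩ := hc (1 / (k + 1)) (by positivity)
    exact ⟨n, h1, h2, fun m hm1 hm2 => lt_of_not_ge fun hle => absurd hle (by
      have := h3 m hm1 hm2; intro h'; exact absurd h' (not_le.mpr this))⟩
  choose ns h1 h2 h3 using hseq
  have hmem : ∀ k, ns k ∈ Metric.sphere (0 : E2) 1 := by
    intro k; rw [mem_sphere_zero_iff_norm]; exact h1 k
  obtain ⟨nb, hnb, φ, hφ, hconv⟩ := (isCompact_sphere (0 : E2) 1).tendsto_subseq hmem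
  have hnb1 : ‖nb‖ = 1 := mem_sphere_zero_iff_norm.mp hnb
  have hN : ∀ x ∈ K, ⟪x - p, nb⟫ ≤ 0 := by
    intro x hx
    have hlim : Filter.Tendsto (fun k => ⟪x - p, ns (φ k)⟫) Filter.atTop (nhds ⟪x - p, nb⟫) :=
      Filter.Tendsto.inner tendsto_const_nhds hconv
    have hlim0 : Filter.Tendsto (fun k : ℕ => 1 / ((φ k : ℝ) + 1)) Filter.atTop (nhds 0) := by
      apply Filter.Tendsto.comp tendsto_one_div_add_atTop_nhds_zero_nat hφ.tendsto_atTop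
    exact le_of_tendsto_of_tendsto' hlim hlim0 (fun k => h2 (φ k) x hx)
  have hd : Filter.Tendsto (fun k => ‖ns (φ k) - nb‖) Filter.atTop (nhds 0) := by
    have := hconv.sub (tendsto_const_nhds (x := nb))
    simpa using this.norm
  obtain ⟨k, hk⟩ := (Metric.tendsto_atTop.mp hd δ hδ) |>.imp (fun k hk => hk k le_rfl)
  have hlt := h3 (φ k) nb hnb1 hN
  rw [Real.dist_eq, sub_zero, abs_of_nonneg (norm_nonneg _)] at hk
  linarith

lemma suppFn_le {K : Set E2} (hKc : IsCompact K) (n : E2) {x : E2} (hx : x ∈ K) :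
    ⟪x, n⟫ ≤ suppFn K n := by
  apply le_csSup
  · exact (hKc.image (Continuous.inner continuous_id continuous_const)).bddAbove
  · exact Set.mem_image_of_mem _ hx

lemma spike_lemma {K : Set E2} (hKc : IsCompact K) {u p : E2}
    (hT : tangentConeOf K p ∩ suppHyp K u = {p}) (hpM : ⟪p, u⟫ = suppFn K u) :
    ∃ C > 0, ∀ x ∈ K, ‖x - p‖ ≤ C * (suppFn K u - ⟪x, u⟫) := by
  by_contra hc
  push_neg at hc
  have hseq : ∀ k : ℕ, ∃ x ∈ K, ((k:ℝ) + 1) * (suppFn K u - ⟪x, u⟫) < ‖x - p‖ := by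
    intro k
    obtain ⟨x, hx, hlt⟩ := hc ((k:ℝ) + 1) (by positivity)
    exact ⟨x, hx, hlt⟩
  choose xs hxs hlt using hseq
  have hge : ∀ x ∈ K, 0 ≤ suppFn K u - ⟪x, u⟫ := fun x hx => by
    have := suppFn_le hKc u hx; linarith
  have hne : ∀ k, xs k ≠ p := by
    intro k he
    have := hlt k
    rw [he] at this
    simp only [sub_self, norm_zero] at this
    nlinarith [hge (xs k) (hxs k), this, he ▸ hge p ((he ▸ hxs k))]
  set ds : ℕ → E2 := fun k => ‖xs k - p‖⁻¹ • (xs k - p) with hds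
  have hnorm : ∀ k, ‖ds k‖ = 1 := by
    intro k
    rw [hds]
    simp only [norm_smul, norm_inv, norm_norm]
    rw [inv_mul_cancel₀]
    exact norm_ne_zero_iff.mpr (sub_ne_zero.mpr (hne k))
  have hmem : ∀ k, ds k ∈ Metric.sphere (0 : E2) 1 := fun k =>
    mem_sphere_zero_iff_norm.mpr (hnorm k)
  obtain ⟨db, hdb, φ, hφ, hconv⟩ := (isCompact_sphere (0 : E2) 1).tendsto_subseq hmem
  have hdb1 : ‖db‖ = 1 := mem_sphere_zero_iff_norm.mp hdb
  -- p + db is in the tangent cone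
  have htc : p + db ∈ tangentConeOf K p := by
    have hpre : ∀ k, p + ds k ∈ {z | ∃ y ∈ K, ∃ α : ℝ, 0 ≤ α ∧ z = p + α • (y - p)} := by
      intro k
      exact ⟨xs k, hxs k, ‖xs k - p‖⁻¹, inv_nonneg.mpr (norm_nonneg _), rfl⟩
    have hlim : Filter.Tendsto (fun k => p + ds (φ k)) Filter.atTop (nhds (p + db)) :=
      Filter.Tendsto.const_add p hconv
    exact mem_closure_of_tendsto hlim (Filter.Eventually.of_forall fun k =>
      subset_closure (hpre (φ k)) |> fun h => hpre (φ k))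
  -- inner product of db with u is 0
  have hinner : ⟪p + db, u⟫ = suppFn K u := by
    have hb : ∀ k, |⟪ds k, u⟫| ≤ 1 / ((k:ℝ) + 1) := by
      intro k
      have h1 : ⟪ds k, u⟫ = ‖xs k - p‖⁻¹ * ⟪xs k - p, u⟫ := by
        rw [hds]; exact real_inner_smul_left _ _ _
      have h2 : ⟪xs k - p, u⟫ = ⟪xs k, u⟫ - suppFn K u := by
        rw [inner_sub_left, hpM]
      have h3 : 0 < ‖xs k - p‖ := norm_pos_iff.mpr (sub_ne_zero.mpr (hne k))
      have h5 : 0 ≤ suppFn K u - ⟪xs k, u⟫ := hge _ (hxs k)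
      rw [h1, h2, abs_mul, abs_of_nonneg (inv_nonneg.mpr (norm_nonneg _))]
      rw [abs_of_nonpos (by linarith), neg_sub]
      rw [inv_mul_le_iff₀ h3]
      have hk1 : (0:ℝ) < (k:ℝ) + 1 := by positivity
      have h1div : (0:ℝ) < 1 / ((k:ℝ)+1) := by positivity
      have hcc : ((k:ℝ)+1) * (1/((k:ℝ)+1)) = 1 := by field_simp
      nlinarith [hlt k]
    have hlim : Filter.Tendsto (fun k => ⟪ds (φ k), u⟫) Filter.atTop (nhds ⟪db, u⟫) :=
      Filter.Tendsto.inner hconv tendsto_const_nhds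
    have h0 : ⟪db, u⟫ = 0 := by
      have habs : Filter.Tendsto (fun k => |⟪ds (φ k), u⟫|) Filter.atTop (nhds |⟪db, u⟫|) :=
        hlim.abs
      have hlim0 : Filter.Tendsto (fun k : ℕ => 1 / ((φ k : ℝ) + 1)) Filter.atTop (nhds 0) := by
        apply Filter.Tendsto.comp tendsto_one_div_add_atTop_nhds_zero_nat hφ.tendsto_atTop
      have := le_of_tendsto_of_tendsto' habs hlim0 (fun k => hb (φ k))
      have h2 := abs_nonneg ⟪db, u⟫
      have : |⟪db, u⟫| = 0 := le_antisymm this h2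
      exact abs_eq_zero.mp this
    rw [inner_add_left, h0, hpM]; ring
  have : p + db ∈ tangentConeOf K p ∩ suppHyp K u := ⟨htc, hinner⟩
  rw [hT] at this
  have : db = 0 := by
    have := Set.mem_singleton_iff.mp this
    have : p + db = p + 0 := by rw [this, add_zero]
    exact add_left_cancel this
  rw [this, norm_zero] at hdb1
  exact absurd hdb1 (by norm_num)

set_option maxHeartbeats 2000000 in
lemma decomp_lemma {K : Set E2} (p z₀ : E2) {ρ : ℝ} (hρ : 0 < ρ)
    (hball : Metric.closedBall z₀ ρ ⊆ K) {u : E2} (hu : ‖u‖ = 1)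
    (huN : ∀ x ∈ K, ⟪x - p, u⟫ ≤ 0) :
    ∃ m₁ m₂ : E2, ‖m₁‖ = 1 ∧ ‖m₂‖ = 1 ∧ (∀ x ∈ K, ⟪x - p, m₁⟫ ≤ 0) ∧
      (∀ x ∈ K, ⟪x - p, m₂⟫ ≤ 0) ∧
      ∀ nn : E2, ‖nn‖ = 1 → (∀ x ∈ K, ⟪x - p, nn⟫ ≤ 0) →
        ∃ c₁ c₂ : ℝ, 0 ≤ c₁ ∧ 0 ≤ c₂ ∧ 1 ≤ c₁ + c₂ ∧ nn = c₁ • m₁ + c₂ • m₂ := by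
  set v := vperp u with hv
  set nθ : ℝ → E2 := fun θ => Real.cos θ • u + Real.sin θ • v with hnθ
  set Nset : Set E2 := {n | ∀ x ∈ K, ⟪x - p, n⟫ ≤ 0} with hNset
  have hNclosed : IsClosed Nset := by
    have : Nset = ⋂ x ∈ K, {n : E2 | ⟪x - p, n⟫ ≤ 0} := by
      ext n; simp [hNset]
    rw [this]
    exact isClosed_biInter fun x hx =>
      isClosed_le (Continuous.inner continuous_const continuous_id) continuous_const
  have hKpt : ∀ w : E2, ‖w‖ = 1 → ∀ t : ℝ, |t| ≤ ρ → z₀ + t • w ∈ K := by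
    intro w hw t ht
    apply hball
    rw [Metric.mem_closedBall, dist_eq_norm]
    simp only [add_sub_cancel_left, norm_smul, hw, mul_one]
    exact ht
  have habs : |ρ| ≤ ρ := by rw [abs_of_pos hρ]
  have pointed : ∀ n : E2, ‖n‖ = 1 → n ∈ Nset → -n ∈ Nset → False := by
    intro n hn h1 h2
    have hx1 : z₀ + ρ • n ∈ K := hKpt n hn ρ habs
    have hx2 : z₀ + (-ρ) • n ∈ K := hKpt n hn (-ρ) (by rwa [abs_neg])
    have e1 : ⟪z₀ + ρ • n - p, n⟫ = ⟪z₀ - p, n⟫ + ρ := by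
      have : z₀ + ρ • n - p = (z₀ - p) + ρ • n := by abel
      rw [this, inner_add_left, real_inner_smul_left, real_inner_self_eq_norm_sq, hn]
      ring
    have e2 : ⟪z₀ + (-ρ) • n - p, n⟫ = ⟪z₀ - p, n⟫ - ρ := by
      have : z₀ + (-ρ) • n - p = (z₀ - p) + (-ρ) • n := by abel
      rw [this, inner_add_left, real_inner_smul_left, real_inner_self_eq_norm_sq, hn]
      ring
    have i1 : ⟪z₀ + ρ • n - p, n⟫ ≤ 0 := h1 _ hx1
    have i1' : ⟪z₀ + ρ • n - p, n⟫ ≥ 0 := by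
      have h := h2 _ hx1
      rw [inner_neg_right] at h
      linarith
    have i2' : ⟪z₀ + (-ρ) • n - p, n⟫ ≤ 0 := h1 _ hx2
    have i2'' : ⟪z₀ + (-ρ) • n - p, n⟫ ≥ 0 := by
      have h := h2 _ hx2
      rw [inner_neg_right] at h
      linarith
    rw [e1] at i1 i1'
    rw [e2] at i2' i2''
    linarith
  have hu_mem : u ∈ Nset := huN
  have negu_not : -u ∉ Nset := by
    intro hmem
    have hx1 : z₀ + ρ • u ∈ K := hKpt u hu ρ habs
    have hx2 : z₀ + (-ρ) • u ∈ K := hKpt u hu (-ρ) (by rwa [abs_neg])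
    have i1 : ⟪z₀ + ρ • u - p, u⟫ ≤ 0 := huN _ hx1
    have e1 : ⟪z₀ + ρ • u - p, u⟫ = ⟪z₀ - p, u⟫ + ρ := by
      have : z₀ + ρ • u - p = (z₀ - p) + ρ • u := by abel
      rw [this, inner_add_left, real_inner_smul_left, real_inner_self_eq_norm_sq, hu]
      ring
    have i2 : ⟪z₀ + (-ρ) • u - p, -u⟫ ≤ 0 := hmem _ hx2
    have e2 : ⟪z₀ + (-ρ) • u - p, -u⟫ = -⟪z₀ - p, u⟫ + ρ := by
      have : z₀ + (-ρ) • u - p = (z₀ - p) + (-ρ) • u := by abel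
      rw [this, inner_neg_right, inner_add_left, real_inner_smul_left,
        real_inner_self_eq_norm_sq, hu]
      ring
    rw [e1] at i1
    rw [e2] at i2
    linarith
  have hnθcont : Continuous nθ :=
    (Real.continuous_cos.smul continuous_const).add (Real.continuous_sin.smul continuous_const)
  set S : Set ℝ := Set.Icc (-Real.pi) Real.pi ∩ nθ ⁻¹' Nset with hS
  have hScompact : IsCompact S := isCompact_Icc.inter_right (hNclosed.preimage hnθcont)
  have hnθ0 : nθ 0 = u := by simp [hnθ]
  have hS0 : (0:ℝ) ∈ S := by
    constructor
    · constructor <;> [linarith [Real.pi_pos]; linarith [Real.pi_pos]]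
    · show nθ 0 ∈ Nset
      rw [hnθ0]; exact hu_mem
  have hSne : S.Nonempty := ⟨0, hS0⟩
  have hunit : ∀ θ, ‖nθ θ‖ = 1 := fun θ =>
    norm_combo hu _ _ (Real.cos_sq_add_sin_sq θ)
  have hnpi : nθ Real.pi = -u := by simp [hnθ]
  have hnnegpi : nθ (-Real.pi) = -u := by simp [hnθ]
  set θmax := sSup S with hθmax
  set θmin := sInf S with hθmin
  have hmaxS : θmax ∈ S := hScompact.sSup_mem hSne
  have hminS : θmin ∈ S := hScompact.sInf_mem hSne
  have hmaxlt : θmax < Real.pi := by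
    rcases lt_or_eq_of_le hmaxS.1.2 with h | h
    · exact h
    · exfalso; apply negu_not; rw [← hnpi, ← h]; exact hmaxS.2
  have hminlt : -Real.pi < θmin := by
    rcases lt_or_eq_of_le hminS.1.1 with h | h
    · exact h
    · exfalso; apply negu_not; rw [← hnnegpi, h]; exact hminS.2
  have hmin0 : θmin ≤ 0 := csInf_le hScompact.bddBelow hS0
  have hmax0 : 0 ≤ θmax := le_csSup hScompact.bddAbove hS0
  have arcconv : ∀ θ₁ θ₂ θ : ℝ, θ₁ ∈ S → θ₂ ∈ S → θ₁ ≤ θ → θ ≤ θ₂ → θ₂ - θ₁ < Real.pi →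
      θ ∈ S := by
    intro θ₁ θ₂ θ h1 h2 hle1 hle2 hlt
    constructor
    · exact ⟨le_trans h1.1.1 hle1, le_trans hle2 h2.1.2⟩
    · show nθ θ ∈ Nset
      rcases eq_or_lt_of_le (le_trans hle1 hle2) with heq | hltq
      · have hq : θ = θ₁ := le_antisymm (heq ▸ hle2) hle1
        rw [hq]
        exact h1.2
      · have hΔpos : 0 < Real.sin (θ₂ - θ₁) :=
          Real.sin_pos_of_pos_of_lt_pi (by linarith) (by linarith)
        intro x hx
        have hvid : Real.sin (θ₂ - θ₁) • nθ θ
            = Real.sin (θ₂ - θ) • nθ θ₁ + Real.sin (θ - θ₁) • nθ θ₂ := by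
          simp only [hnθ]
          exact vector_trig_id θ₁ θ θ₂
        have hinner : Real.sin (θ₂ - θ₁) * ⟪x - p, nθ θ⟫
            = Real.sin (θ₂ - θ) * ⟪x - p, nθ θ₁⟫ + Real.sin (θ - θ₁) * ⟪x - p, nθ θ₂⟫ := by
          have h := congrArg (fun w => ⟪x - p, w⟫) hvid
          simpa only [inner_add_right, real_inner_smul_right] using h
        have c1 : 0 ≤ Real.sin (θ₂ - θ) :=
          Real.sin_nonneg_of_nonneg_of_le_pi (by linarith) (by linarith)
        have c2 : 0 ≤ Real.sin (θ - θ₁) :=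
          Real.sin_nonneg_of_nonneg_of_le_pi (by linarith) (by linarith)
        have r1 : ⟪x - p, nθ θ₁⟫ ≤ 0 := h1.2 x hx
        have r2 : ⟪x - p, nθ θ₂⟫ ≤ 0 := h2.2 x hx
        nlinarith [mul_nonneg c1 (neg_nonneg.mpr r1), mul_nonneg c2 (neg_nonneg.mpr r2)]
  have hΔlt : θmax - θmin < Real.pi := by
    by_contra hge
    push_neg at hge
    have hθ'S : θmax - Real.pi ∈ S := by
      rcases le_or_gt (θmax - Real.pi) 0 with h | h
      · exact arcconv θmin 0 _ hminS hS0 (by linarith) h (by linarith)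
      · exact arcconv 0 θmax _ hS0 hmaxS (le_of_lt h) (by linarith [Real.pi_pos]) (by linarith)
    have hneg : nθ (θmax - Real.pi) = -(nθ θmax) := by
      simp only [hnθ, Real.cos_sub_pi, Real.sin_sub_pi]
      rw [neg_smul, neg_smul, neg_add]
    exact pointed (nθ θmax) (hunit _) hmaxS.2 (by rw [← hneg]; exact hθ'S.2)
  refine ⟨nθ θmin, nθ θmax, hunit _, hunit _, hminS.2, hmaxS.2, ?_⟩
  intro nn hnn hnnN
  set a := ⟪nn, u⟫ with ha
  set b := ⟪nn, v⟫ with hb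
  have hexp : nn = a • u + b • v := expand_basis hu nn
  have hab : a ^ 2 + b ^ 2 = 1 := by
    have h1 : ⟪nn, nn⟫ = (1:ℝ) := by rw [real_inner_self_eq_norm_sq, hnn]; norm_num
    rw [hexp, inner_combo hu] at h1
    nlinarith
  obtain ⟨θ, hθ1, hθ2, hθc, hθs⟩ := exists_angle hab
  have hnnθ : nn = nθ θ := by rw [hexp, hnθ]; simp only [hθc, hθs]
  have hθne : θ ≠ Real.pi := by
    intro h
    apply negu_not
    rw [← hnpi, ← h, ← hnnθ]
    exact hnnN
  have hθS : θ ∈ S := ⟨⟨le_of_lt hθ1, hθ2⟩, by show nθ θ ∈ Nset; rw [← hnnθ]; exact hnnN⟩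
  have hθge : θmin ≤ θ := csInf_le hScompact.bddBelow hθS
  have hθle : θ ≤ θmax := le_csSup hScompact.bddAbove hθS
  rcases eq_or_lt_of_le (le_trans hθge hθle : θmin ≤ θmax) with heq | hΔpos
  · have h1 : θ = θmin := le_antisymm (heq ▸ hθle) hθge
    refine ⟨1, 0, by norm_num, le_refl 0, by norm_num, ?_⟩
    rw [hnnθ, h1, one_smul, zero_smul, add_zero]
  · have hsΔ : 0 < Real.sin (θmax - θmin) :=
      Real.sin_pos_of_pos_of_lt_pi (by linarith) hΔlt
    set c₁ := Real.sin (θmax - θ) / Real.sin (θmax - θmin) with hc₁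
    set c₂ := Real.sin (θ - θmin) / Real.sin (θmax - θmin) with hc₂
    have s1 : 0 ≤ Real.sin (θmax - θ) :=
      Real.sin_nonneg_of_nonneg_of_le_pi (by linarith) (by linarith)
    have s2 : 0 ≤ Real.sin (θ - θmin) :=
      Real.sin_nonneg_of_nonneg_of_le_pi (by linarith) (by linarith)
    have hc1n : 0 ≤ c₁ := div_nonneg s1 (le_of_lt hsΔ)
    have hc2n : 0 ≤ c₂ := div_nonneg s2 (le_of_lt hsΔ)
    have hdecomp : nn = c₁ • nθ θmin + c₂ • nθ θmax := by
      have hvid : Real.sin (θmax - θmin) • nθ θ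
          = Real.sin (θmax - θ) • nθ θmin + Real.sin (θ - θmin) • nθ θmax := by
        simp only [hnθ]
        exact vector_trig_id θmin θ θmax
      rw [hnnθ]
      rw [hc₁, hc₂, div_eq_inv_mul, div_eq_inv_mul, ← smul_smul, ← smul_smul, ← smul_add,
        ← hvid, smul_smul, inv_mul_cancel₀ (ne_of_gt hsΔ), one_smul]
    refine ⟨c₁, c₂, hc1n, hc2n, ?_, hdecomp⟩
    have : (1:ℝ) = ‖nn‖ := hnn.symm
    rw [hdecomp] at this
    calc (1:ℝ) = ‖c₁ • nθ θmin + c₂ • nθ θmax‖ := this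
    _ ≤ ‖c₁ • nθ θmin‖ + ‖c₂ • nθ θmax‖ := norm_add_le _ _
    _ = c₁ + c₂ := by
        rw [norm_smul, norm_smul, hunit, hunit, mul_one, mul_one,
          Real.norm_eq_abs, Real.norm_eq_abs, abs_of_nonneg hc1n, abs_of_nonneg hc2n]

set_option maxHeartbeats 2000000 in
/-- a planar convex body which is spiky in a minimal width direction admits,
for every `ε ∈ (0,1)`, a placement of `ε • K` inside `int K` so that the annulus can be
covered by finitely many planks of total width `< w(K)`. -/
theorem spiky_annulus_dim_two (K : Set (EuclideanSpace ℝ (Fin 2)))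
    (hKc : IsCompact K) (hKconv : Convex ℝ K) (hKint : (interior K).Nonempty)
    (u : EuclideanSpace ℝ (Fin 2)) (hu : ‖u‖ = 1)
    (hmin : suppFn K u + suppFn K (-u) = minWidth K)
    (hspiky : IsSpiky K u)
    (ε : ℝ) (hε : ε ∈ Set.Ioo (0 : ℝ) 1) :
    ∃ y : EuclideanSpace ℝ (Fin 2),
      ε • K + {y} ⊆ interior K ∧
      ∃ (n : ℕ) (P : Fin n → Set (EuclideanSpace ℝ (Fin 2))) (w : Fin n → ℝ),
        (∀ i, IsPlank (P i) (w i)) ∧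
        (K \ (ε • K + {y}) ⊆ ⋃ i, P i) ∧
        ∑ i, w i < minWidth K := by
  obtain ⟨hε0, hε1⟩ := hε
  set M := suppFn K u with hM
  set hneg := suppFn K (-u) with hhneg
  -- the spike point
  obtain ⟨p, hp1, hp2⟩ := hspiky
  have hpmem : p ∈ K ∩ suppHyp K u := by rw [hp1]; exact rfl
  have hpK : p ∈ K := hpmem.1
  have hpM : ⟪p, u⟫ = M := hpmem.2
  -- spike constant
  obtain ⟨C, hC, hspike⟩ := spike_lemma hKc hp2 hpM
  -- interior ball
  obtain ⟨z₀, hz₀⟩ := hKint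
  obtain ⟨ρ, hρ, hball⟩ : ∃ ρ > 0, Metric.closedBall z₀ ρ ⊆ K := by
    have hz := hz₀
    rw [mem_interior_iff_mem_nhds, Metric.mem_nhds_iff] at hz
    obtain ⟨δ', hδ', hb⟩ := hz
    exact ⟨δ'/2, by linarith, subset_trans (Metric.closedBall_subset_ball (by linarith)) hb⟩
  have hle : ∀ x ∈ K, ⟪x, u⟫ ≤ M := fun x hx => suppFn_le hKc u hx
  have hleneg : ∀ x ∈ K, ⟪x, -u⟫ ≤ hneg := fun x hx => suppFn_le hKc (-u) hx
  have huN : ∀ x ∈ K, ⟪x - p, u⟫ ≤ 0 := by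
    intro x hx
    rw [inner_sub_left, hpM]
    have := hle x hx; linarith
  -- the two extreme normals
  obtain ⟨m₁, m₂, hm₁u, hm₂u, hm₁N, hm₂N, hdec⟩ := decomp_lemma p z₀ hρ hball hu huN
  set D := ‖z₀ - p‖ with hD
  have hz₀ρu : z₀ + ρ • u ∈ K := by
    apply hball
    rw [Metric.mem_closedBall, dist_eq_norm]
    simp only [add_sub_cancel_left, norm_smul, hu, mul_one, Real.norm_eq_abs]
    rw [abs_of_pos hρ]
  have hz₀ρu' : z₀ + (-ρ) • u ∈ K := by
    apply hball
    rw [Metric.mem_closedBall, dist_eq_norm]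
    simp only [add_sub_cancel_left, norm_smul, hu, mul_one, Real.norm_eq_abs]
    rw [abs_neg, abs_of_pos hρ]
  have hz₀u : ⟪z₀ - p, u⟫ ≤ -ρ := by
    have h1 := huN _ hz₀ρu
    have : z₀ + ρ • u - p = (z₀ - p) + ρ • u := by abel
    rw [this, inner_add_left, real_inner_smul_left, real_inner_self_eq_norm_sq, hu] at h1
    simp only [one_pow, mul_one] at h1
    linarith
  have hDρ : ρ ≤ D := by
    have h1 := abs_real_inner_le_norm (z₀ - p) u
    rw [hu, mul_one] at h1
    have h2 : ρ ≤ |⟪z₀ - p, u⟫| := by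
      rw [abs_of_nonpos (by linarith)]
      linarith
    linarith
  have hDpos : 0 < D := lt_of_lt_of_le hρ hDρ
  -- width positivity
  have hwρ : 2 * ρ ≤ M + hneg := by
    have h1 := hle _ hz₀ρu
    have h2 := hleneg _ hz₀ρu'
    rw [inner_add_left, real_inner_smul_left, real_inner_self_eq_norm_sq, hu] at h1
    rw [inner_neg_right, inner_add_left, real_inner_smul_left, real_inner_self_eq_norm_sq,
      hu] at h2
    simp only [one_pow, mul_one] at h1 h2
    linarith
  have hwpos : 0 < M + hneg := by linarith
  -- parameters
  obtain ⟨δ, hδdef⟩ : ∃ a : ℝ, a = 1 / (8 * C) := ⟨_, rfl⟩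
  have hδ : 0 < δ := by rw [hδdef]; positivity
  obtain ⟨δ₀, hδ₀, hloc⟩ := loc_lemma K p hδ
  obtain ⟨g, hgdef⟩ : ∃ a : ℝ, a = min ((M + hneg) / 2) (ε * δ₀ / (2 * C)) := ⟨_, rfl⟩
  have hg : 0 < g := by
    rw [hgdef]
    apply lt_min (by linarith)
    positivity
  have hgw : g ≤ (M + hneg) / 2 := by rw [hgdef]; exact min_le_left _ _
  have hrδ₀ : C * g ≤ ε * δ₀ / 2 := by
    have h1 : g ≤ ε * δ₀ / (2 * C) := by rw [hgdef]; exact min_le_right _ _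
    have h2 : C * g ≤ C * (ε * δ₀ / (2 * C)) := mul_le_mul_of_nonneg_left h1 hC.le
    have h3 : C * (ε * δ₀ / (2 * C)) = ε * δ₀ / 2 := by field_simp
    linarith
  obtain ⟨r, hrdef⟩ : ∃ a : ℝ, a = C * g := ⟨_, rfl⟩
  have hrpos : 0 < r := by rw [hrdef]; positivity
  have hrδ₀' : r ≤ ε * δ₀ / 2 := by rw [hrdef]; exact hrδ₀
  have h1ε : 0 < 1 - ε := by linarith
  obtain ⟨T, hTdef⟩ : ∃ a : ℝ, a = min (ε * δ₀ / 2) (g / 16) := ⟨_, rfl⟩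
  have hT : 0 < T := by
    rw [hTdef]
    exact lt_min (by positivity) (by positivity)
  obtain ⟨μ, hμdef⟩ : ∃ a : ℝ, a = min 1 (T / ((1 - ε) * D)) := ⟨_, rfl⟩
  have hμpos : 0 < μ := by
    rw [hμdef]
    exact lt_min one_pos (by positivity)
  have hμ1 : μ ≤ 1 := by rw [hμdef]; exact min_le_left _ _
  obtain ⟨W₀, hW₀def⟩ : ∃ a : ℝ, a = (1 - ε) * μ * D := ⟨_, rfl⟩
  have hW₀pos : 0 < W₀ := by rw [hW₀def]; positivity
  have hW₀le : W₀ ≤ T := by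
    have h1 : μ ≤ T / ((1 - ε) * D) := by rw [hμdef]; exact min_le_right _ _
    have h2 : (1 - ε) * D * μ ≤ (1 - ε) * D * (T / ((1 - ε) * D)) :=
      mul_le_mul_of_nonneg_left h1 (by positivity)
    have h3 : (1 - ε) * D * (T / ((1 - ε) * D)) = T := by field_simp
    have h4 : (1 - ε) * μ * D = (1 - ε) * D * μ := by ring
    rw [hW₀def]
    linarith
  have hW₀a : W₀ ≤ ε * δ₀ / 2 := le_trans hW₀le (by rw [hTdef]; exact min_le_left _ _)
  have hW₀b : W₀ ≤ g / 16 := le_trans hW₀le (by rw [hTdef]; exact min_le_right _ _)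
  obtain ⟨Z, hZdef⟩ : ∃ a : ℝ, a = 2 * W₀ + g / 4 := ⟨_, rfl⟩
  have hZpos : 0 < Z := by rw [hZdef]; positivity
  -- placement
  set q := p + μ • (z₀ - p) with hqdef
  have hqint : q ∈ interior K := by
    have hcombo : q = μ • z₀ + (1 - μ) • p := by
      rw [hqdef]; module
    rw [hcombo]
    exact hKconv.combo_interior_closure_mem_interior hz₀ (subset_closure hpK) hμpos
      (by linarith) (by ring)
  set y := (1 - ε) • q with hydef
  refine ⟨y, ?_, ?_⟩
  · -- ε • K + {y} ⊆ interior K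
    intro a ha
    obtain ⟨b, hb, c, hc, hbc⟩ := Set.mem_add.mp ha
    obtain ⟨x, hx, hxb⟩ := Set.mem_smul_set.mp hb
    have hcy : c = y := hc
    have : a = (1 - ε) • q + ε • x := by
      rw [← hbc, ← hxb, hcy, hydef]; abel
    rw [this]
    exact hKconv.combo_interior_closure_mem_interior hqint (subset_closure hx) h1ε
      (by linarith) (by ring)
  · -- planks
    set P₀ : Set E2 := {x : E2 | -hneg ≤ ⟪x, u⟫ ∧ ⟪x, u⟫ ≤ M - g} with hP₀
    set P₁ : Set E2 := {x : E2 | ⟪p, m₁⟫ - Z ≤ ⟪x, m₁⟫ ∧ ⟪x, m₁⟫ ≤ ⟪p, m₁⟫} with hP₁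
    set P₂ : Set E2 := {x : E2 | ⟪p, m₂⟫ - Z ≤ ⟪x, m₂⟫ ∧ ⟪x, m₂⟫ ≤ ⟪p, m₂⟫} with hP₂
    refine ⟨3, ![P₀, P₁, P₂], ![(M - g) + hneg, Z, Z], ?_, ?_, ?_⟩
    · intro i
      fin_cases i
      · refine ⟨u, -hneg, M - g, hu, by linarith, ?_, ?_⟩
        · show (M - g) + hneg = (M - g) - -hneg
          ring
        · show P₀ = _
          rfl
      · refine ⟨m₁, ⟪p, m₁⟫ - Z, ⟪p, m₁⟫, hm₁u, by linarith, ?_, ?_⟩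
        · show Z = ⟪p, m₁⟫ - (⟪p, m₁⟫ - Z)
          ring
        · show P₁ = _
          rfl
      · refine ⟨m₂, ⟪p, m₂⟫ - Z, ⟪p, m₂⟫, hm₂u, by linarith, ?_, ?_⟩
        · show Z = ⟪p, m₂⟫ - (⟪p, m₂⟫ - Z)
          ring
        · show P₂ = _
          rfl
    · -- coverage
      rintro x ⟨hxK, hxout⟩
      rw [Set.mem_iUnion]
      by_cases hcase : ⟪x, u⟫ ≤ M - g
      · refine ⟨0, ?_⟩
        show x ∈ P₀
        refine ⟨?_, hcase⟩
        have := hleneg x hxK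
        rw [inner_neg_right] at this
        linarith
      · push_neg at hcase
        have hxr : ‖x - p‖ ≤ r := by
          have h1 := hspike x hxK
          have h2 : M - ⟪x, u⟫ ≤ g := by linarith
          rw [hrdef]
          calc ‖x - p‖ ≤ C * (M - ⟪x, u⟫) := h1
          _ ≤ C * g := mul_le_mul_of_nonneg_left h2 hC.le
        -- separation
        have hK''conv : Convex ℝ (ε • K + {y}) := (hKconv.smul ε).add (convex_singleton y)
        have hK''closed : IsClosed (ε • K + {y}) :=
          ((hKc.smul ε).add isCompact_singleton).isClosed
        obtain ⟨f, t, hft, htx⟩ := geometric_hahn_banach_closed_point hK''conv hK''closed hxout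
        set z := (InnerProductSpace.toDual ℝ E2).symm f with hzdef
        have hzf : ∀ w : E2, ⟪z, w⟫ = f w := fun w => InnerProductSpace.toDual_symm_apply
        have hK''mem : ∀ x' ∈ K, ε • x' + y ∈ ε • K + {y} := fun x' hx' =>
          add_mem_add (smul_mem_smul_set hx') rfl
        have hzne : z ≠ 0 := by
          intro h0
          have h1 := hft _ (hK''mem p hpK)
          have h2 : f (ε • p + y) = ⟪z, ε • p + y⟫ := (hzf _).symm
          have h3 : f x = ⟪z, x⟫ := (hzf _).symm
          rw [h0] at h2 h3
          simp only [inner_zero_left] at h2 h3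
          rw [h2] at h1; rw [h3] at htx
          linarith
        set n := ‖z‖⁻¹ • z with hndef
        have hzpos : 0 < ‖z‖ := norm_pos_iff.mpr hzne
        have hn1 : ‖n‖ = 1 := by
          rw [hndef, norm_smul, norm_inv, norm_norm, inv_mul_cancel₀ (ne_of_gt hzpos)]
        have hsep : ∀ x' ∈ K, ε * ⟪x', n⟫ + ⟪y, n⟫ ≤ ⟪x, n⟫ := by
          intro x' hx'
          have h1 := hft _ (hK''mem x' hx')
          have h2 : ⟪z, ε • x' + y⟫ ≤ ⟪z, x⟫ := by
            rw [hzf, hzf]; linarith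
          rw [inner_add_right, real_inner_smul_right] at h2
          have h3 : ⟪ε • x' + y - (ε • x' + y), z⟫ = 0 := by simp
          -- convert to n by scaling
          have h4 : ‖z‖⁻¹ * (ε * ⟪z, x'⟫ + ⟪z, y⟫) ≤ ‖z‖⁻¹ * ⟪z, x⟫ := by
            apply mul_le_mul_of_nonneg_left h2 (by positivity)
          have e1 : ⟪x', n⟫ = ‖z‖⁻¹ * ⟪z, x'⟫ := by
            rw [hndef, real_inner_comm, real_inner_smul_left]
          have e2 : ⟪y, n⟫ = ‖z‖⁻¹ * ⟪z, y⟫ := by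
            rw [hndef, real_inner_comm, real_inner_smul_left]
          have e3 : ⟪x, n⟫ = ‖z‖⁻¹ * ⟪z, x⟫ := by
            rw [hndef, real_inner_comm, real_inner_smul_left]
          rw [e1, e2, e3]
          calc ε * (‖z‖⁻¹ * ⟪z, x'⟫) + ‖z‖⁻¹ * ⟪z, y⟫
              = ‖z‖⁻¹ * (ε * ⟪z, x'⟫ + ⟪z, y⟫) := by ring
          _ ≤ ‖z‖⁻¹ * ⟪z, x⟫ := h4
        have hyinner : ⟪y, n⟫ = (1 - ε) * (⟪p, n⟫ + μ * ⟪z₀ - p, n⟫) := by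
          rw [hydef, hqdef, real_inner_smul_left, inner_add_left, real_inner_smul_left]
        have hCS : |⟪z₀ - p, n⟫| ≤ D := by
          have := abs_real_inner_le_norm (z₀ - p) n
          rw [hn1, mul_one] at this
          exact this
        have hCS1 : -D ≤ ⟪z₀ - p, n⟫ := by
          have := abs_le.mp hCS; exact this.1
        have hCS2 : ⟪z₀ - p, n⟫ ≤ D := (abs_le.mp hCS).2
        -- lower bound on ⟪x - p, n⟫
        have hlow : -W₀ ≤ ⟪x - p, n⟫ := by
          have h1 := hsep p hpK
          rw [hyinner] at h1
          rw [inner_sub_left]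
          have hμε : 0 ≤ (1 - ε) * μ := by positivity
          have h5 := mul_le_mul_of_nonneg_left hCS1 hμε
          have h6 : (1 - ε) * μ * -D = -W₀ := by rw [hW₀def]; ring
          rw [h6] at h5
          rw [show ε * ⟪p, n⟫ + (1 - ε) * (⟪p, n⟫ + μ * ⟪z₀ - p, n⟫)
              = ⟪p, n⟫ + (1 - ε) * μ * ⟪z₀ - p, n⟫ from by ring] at h1
          linarith [h1, h5]
        -- upper bound for all points of K
        have hup : ∀ x' ∈ K, ⟪x' - p, n⟫ ≤ δ₀ := by
          intro x' hx'
          have h1 := hsep x' hx'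
          rw [hyinner] at h1
          have h2 : ⟪x - p, n⟫ ≤ r := by
            have := real_inner_le_norm (x - p) n
            rw [hn1, mul_one] at this
            linarith
          have h3 : ε * ⟪x' - p, n⟫ ≤ r + W₀ := by
            rw [inner_sub_left]
            rw [inner_sub_left] at h2
            have hμε : 0 ≤ (1 - ε) * μ := by positivity
            have h5 := mul_le_mul_of_nonneg_left hCS1 hμε
            have h6 : (1 - ε) * μ * -D = -W₀ := by rw [hW₀def]; ring
            rw [h6] at h5
            rw [show (1 - ε) * (⟪p, n⟫ + μ * ⟪z₀ - p, n⟫)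
                = ⟪p, n⟫ - ε * ⟪p, n⟫ + (1 - ε) * μ * ⟪z₀ - p, n⟫ from by ring] at h1
            linarith [h1, h5, h2]
          have h4 : r + W₀ ≤ ε * δ₀ := by linarith [hrδ₀', hW₀a]
          have h5 : ε * ⟪x' - p, n⟫ ≤ ε * δ₀ := le_trans h3 h4
          exact le_of_mul_le_mul_left h5 hε0
        obtain ⟨nt, hnt1, hntN, hntclose⟩ := hloc n hn1 hup
        have hrδ : r * δ = g / 8 := by
          rw [hrdef, hδdef]
          field_simp
        have hxnt : -(Z / 2) ≤ ⟪x - p, nt⟫ := by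
          have h1 : ⟪x - p, n⟫ - ⟪x - p, nt⟫ = ⟪x - p, n - nt⟫ := by
            rw [inner_sub_right]
          have h2 : ⟪x - p, n - nt⟫ ≤ r * δ := by
            have h3 := real_inner_le_norm (x - p) (n - nt)
            have h4 : ‖x - p‖ * ‖n - nt‖ ≤ r * δ := by
              apply mul_le_mul hxr hntclose (norm_nonneg _) (le_of_lt hrpos)
            linarith
          rw [hrδ] at h2
          have : Z / 2 = W₀ + g / 8 := by rw [hZdef]; ring
          linarith
        obtain ⟨c₁, c₂, hc₁, hc₂, hc12, hnteq⟩ := hdec nt hnt1 hntN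
        have hsplit : ⟪x - p, nt⟫ = c₁ * ⟪x - p, m₁⟫ + c₂ * ⟪x - p, m₂⟫ := by
          rw [hnteq, inner_add_right, real_inner_smul_right, real_inner_smul_right]
        have h1n : ⟪x - p, m₁⟫ ≤ 0 := hm₁N x hxK
        have h2n : ⟪x - p, m₂⟫ ≤ 0 := hm₂N x hxK
        by_cases hcc : (1:ℝ)/2 ≤ c₁
        · refine ⟨1, ?_⟩
          show x ∈ P₁
          have hA : -Z ≤ ⟪x - p, m₁⟫ := by
            have hB : c₂ * ⟪x - p, m₂⟫ ≤ 0 := mul_nonpos_iff.mpr (Or.inl ⟨hc₂, h2n⟩)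
            have hc₁A : -(Z/2) ≤ c₁ * ⟪x - p, m₁⟫ := by linarith [hsplit, hxnt, hB]
            by_contra hA'
            push_neg at hA'
            have hc₁pos : (0:ℝ) < c₁ := lt_of_lt_of_le one_half_pos hcc
            have h1' : c₁ * ⟪x - p, m₁⟫ < c₁ * (-Z) := mul_lt_mul_of_pos_left hA' hc₁pos
            have h2' : (1/2) * Z ≤ c₁ * Z := mul_le_mul_of_nonneg_right hcc (le_of_lt hZpos)
            have h3' : c₁ * -Z = -(c₁ * Z) := by ring
            rw [h3'] at h1'
            linarith
          constructor
          · rw [inner_sub_left] at hA; linarith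
          · rw [inner_sub_left] at h1n; linarith
        · refine ⟨2, ?_⟩
          show x ∈ P₂
          push_neg at hcc
          have hcc2 : (1:ℝ)/2 ≤ c₂ := by linarith
          have hA : -Z ≤ ⟪x - p, m₂⟫ := by
            have hB : c₁ * ⟪x - p, m₁⟫ ≤ 0 := mul_nonpos_iff.mpr (Or.inl ⟨hc₁, h1n⟩)
            have hc₂A : -(Z/2) ≤ c₂ * ⟪x - p, m₂⟫ := by linarith [hsplit, hxnt, hB]
            by_contra hA'
            push_neg at hA'
            have hc₂pos : (0:ℝ) < c₂ := lt_of_lt_of_le one_half_pos hcc2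
            have h1' : c₂ * ⟪x - p, m₂⟫ < c₂ * (-Z) := mul_lt_mul_of_pos_left hA' hc₂pos
            have h2' : (1/2) * Z ≤ c₂ * Z := mul_le_mul_of_nonneg_right hcc2 (le_of_lt hZpos)
            have h3' : c₂ * -Z = -(c₂ * Z) := by ring
            rw [h3'] at h1'
            linarith
          constructor
          · rw [inner_sub_left] at hA; linarith
          · rw [inner_sub_left] at h2n; linarith
    · -- total width
      rw [← hmin]
      rw [Fin.sum_univ_three]
      show M - g + hneg + Z + Z < M + hneg
      have h2Z : 2 * Z < g := by
        rw [hZdef]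
        linarith [hW₀b, hg]
      linarith [h2Z, hg]


end
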